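/- Let 1 ≤ i ≤ s and write ξ_i = (k,t). If (a,b) ∈ B_i^{(1.1)} and (b,c) ∈ B_i^{(1.2)} of type (c) (i.e. (b,c) ∈ B_i, 1 < b < k, t < c < k, and (b,t) ∉ B_{i−1} or (k,c) ∉ B_{i−1}), then (a,c) ∈ B_i^{(1.1)}. -/

import Mathlib

open Finset MvPolynomial

namespace Panov

/-- The set `A` of places `(i,j)` with `n ≥ i > j ≥ 1`. -/
def placesA (n : ℕ) : Finset (ℕ × ℕ) :=
  (Finset.range (n + 1) ×ˢ Finset.range (n + 1)).filter fun p => 1 ≤ p.2 ∧ p.2 < p.1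

/-- The rank of a place in the linear order `≻`:
`η ≻ ζ` iff `ordA n η < ordA n ζ`. -/
def ordA (n : ℕ) (p : ℕ × ℕ) : ℕ := p.2 * (n + 1) + (n - p.1)

/-- The `≻`-greatest element of a (nonempty) set `B` of places:
the element with the minimal value of `ordA`. -/
def xiOf (n : ℕ) (B : Finset (ℕ × ℕ)) : ℕ × ℕ :=
  let m := WithTop.untopD 0 ((B.image (ordA n)).min)
  (n - m % (n + 1), m / (n + 1))

/-- The places that get the symbol `−` at the current step, when the
current set of unfilled places is `B`. -/
def minusSet (n : ℕ) (B : Finset (ℕ × ℕ)) : Finset (ℕ × ℕ) :=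
  B.filter fun p =>
    p.1 = (xiOf n B).1 ∧ (xiOf n B).2 < p.2 ∧ p.2 < (xiOf n B).1 ∧ (p.2, (xiOf n B).2) ∈ B

/-- The places that get the symbol `+` at the current step. -/
def plusSet (n : ℕ) (B : Finset (ℕ × ℕ)) : Finset (ℕ × ℕ) :=
  B.filter fun p =>
    p.2 = (xiOf n B).2 ∧ (xiOf n B).2 < p.1 ∧ p.1 < (xiOf n B).1 ∧ ((xiOf n B).1, p.1) ∈ B

/-- `Bset n M i` is the set of places unfilled after step `i` of the diagram. -/
def Bset (n : ℕ) (M : Finset (ℕ × ℕ)) : ℕ → Finset (ℕ × ℕ)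
  | 0 => placesA n \ M
  | i + 1 =>
      Bset n M i \
        insert (xiOf n (Bset n M i)) (minusSet n (Bset n M i) ∪ plusSet n (Bset n M i))

/-- `ξ_i`, the place that receives `⊗` at step `i ≥ 1`. -/
def xiStep (n : ℕ) (M : Finset (ℕ × ℕ)) (i : ℕ) : ℕ × ℕ := xiOf n (Bset n M (i - 1))

/-- `C_i⁻`, the places filled with `−` at step `i ≥ 1`. -/
def Cminus (n : ℕ) (M : Finset (ℕ × ℕ)) (i : ℕ) : Finset (ℕ × ℕ) :=
  minusSet n (Bset n M (i - 1))

/-- `C_i⁺`, the places filled with `+` at step `i ≥ 1`. -/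
def Cplus (n : ℕ) (M : Finset (ℕ × ℕ)) (i : ℕ) : Finset (ℕ × ℕ) :=
  plusSet n (Bset n M (i - 1))

/-- `M ⊆ A` spans an ideal `𝔪` of `𝔫 = ut(n,K)`. -/
def IsIdealSet (n : ℕ) (M : Finset (ℕ × ℕ)) : Prop :=
  M ⊆ placesA n ∧
    (∀ p ∈ M, ∀ d, 1 ≤ d → d < p.2 → (p.1, d) ∈ M) ∧
    (∀ p ∈ M, ∀ c, p.1 < c → c ≤ n → (c, p.2) ∈ M)

/-- `s` is the number of steps after which the diagram is complete. -/
def IsNumSteps (n : ℕ) (M : Finset (ℕ × ℕ)) (s : ℕ) : Prop :=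
  Bset n M s = ∅ ∧ ∀ j < s, (Bset n M j).Nonempty



/-- `(a,b) ∈ B_i^{(1.1)}` (relative to `ξ_i = (k,t)`):  `(a,b) ∈ B_i`,
`1 < a < k`, `t < b < k`, and both `(a,t)` and `(k,b)` lie in `B_{i−1}`. -/
def memB11 (n : ℕ) (M : Finset (ℕ × ℕ)) (i k t : ℕ) (q : ℕ × ℕ) : Prop :=
  q ∈ Bset n M i ∧ 1 < q.1 ∧ q.1 < k ∧ t < q.2 ∧ q.2 < k ∧
    (q.1, t) ∈ Bset n M (i - 1) ∧ (k, q.2) ∈ Bset n M (i - 1)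

/-- `(a,b) ∈ B_i^{(1.2)}` of type (c) (relative to `ξ_i = (k,t)`):
`(a,b) ∈ B_i`, `1 < a < k`, `t < b < k`, and `(a,t) ∉ B_{i−1}` or
`(k,b) ∉ B_{i−1}`. -/
def memB12c (n : ℕ) (M : Finset (ℕ × ℕ)) (i k t : ℕ) (q : ℕ × ℕ) : Prop :=
  q ∈ Bset n M i ∧ 1 < q.1 ∧ q.1 < k ∧ t < q.2 ∧ q.2 < k ∧
    ((q.1, t) ∉ Bset n M (i - 1) ∨ (k, q.2) ∉ Bset n M (i - 1))


section Aux

variable {n : ℕ} {M : Finset (ℕ × ℕ)}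

lemma mem_placesA {p : ℕ × ℕ} : p ∈ placesA n ↔ p.1 ≤ n ∧ 1 ≤ p.2 ∧ p.2 < p.1 := by
  unfold placesA
  simp only [Finset.mem_filter, Finset.mem_product, Finset.mem_range]
  omega

lemma ordA_lt_of_snd_lt {p q : ℕ × ℕ} (h : q.2 < p.2) : ordA n q < ordA n p := by
  unfold ordA
  have h1 : n - q.1 ≤ n := Nat.sub_le _ _
  have h2 : q.2 + 1 ≤ p.2 := h
  nlinarith [Nat.zero_le (n - p.1)]

lemma ordA_lt_of_fst_lt {p q : ℕ × ℕ} (h2 : q.2 = p.2) (h : p.1 < q.1) (hq : q.1 ≤ n) :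
    ordA n q < ordA n p := by
  unfold ordA
  rw [h2]
  exact Nat.add_lt_add_left (by omega) _

lemma ordA_inj {p q : ℕ × ℕ} (hp : p ∈ placesA n) (hq : q ∈ placesA n)
    (h : ordA n p = ordA n q) : p = q := by
  rw [mem_placesA] at hp hq
  have h2 : p.2 = q.2 := by
    rcases lt_trichotomy p.2 q.2 with hlt | heq | hlt
    · have := ordA_lt_of_snd_lt (n := n) (p := q) (q := p) hlt; omega
    · exact heq
    · have := ordA_lt_of_snd_lt (n := n) (p := p) (q := q) hlt; omega
  have h1 : p.1 = q.1 := by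
    rcases lt_trichotomy p.1 q.1 with hlt | heq | hlt
    · have := ordA_lt_of_fst_lt (n := n) (p := p) (q := q) h2.symm hlt hq.1; omega
    · exact heq
    · have := ordA_lt_of_fst_lt (n := n) (p := q) (q := p) h2 hlt hp.1; omega
  exact Prod.ext_iff.2 ⟨h1, h2⟩

lemma ordA_mod {p : ℕ × ℕ} (hp : p ∈ placesA n) : ordA n p % (n + 1) = n - p.1 := by
  rw [mem_placesA] at hp
  unfold ordA
  rw [add_comm, Nat.add_mul_mod_self_right, Nat.mod_eq_of_lt (by omega)]

lemma ordA_div {p : ℕ × ℕ} (hp : p ∈ placesA n) : ordA n p / (n + 1) = p.2 := by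
  rw [mem_placesA] at hp
  unfold ordA
  rw [add_comm, Nat.add_mul_div_right _ _ (Nat.succ_pos n), Nat.div_eq_of_lt (by omega)]
  omega

lemma xiOf_spec {B : Finset (ℕ × ℕ)} (hne : B.Nonempty) (hB : B ⊆ placesA n) :
    xiOf n B ∈ B ∧ ∀ p ∈ B, ordA n (xiOf n B) ≤ ordA n p := by
  have himg : (B.image (ordA n)).Nonempty := hne.image _
  obtain ⟨q, hq, hq2⟩ := Finset.mem_image.1 (Finset.min'_mem _ himg)
  have hmin : WithTop.untopD 0 ((B.image (ordA n)).min) = (B.image (ordA n)).min' himg := by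
    rw [← Finset.coe_min' himg]; rfl
  have hxi : xiOf n B = q := by
    simp only [xiOf]
    rw [hmin, ← hq2, ordA_mod (hB hq), ordA_div (hB hq)]
    have hqA := mem_placesA.1 (hB hq)
    exact Prod.ext_iff.2 ⟨by omega, rfl⟩
  refine ⟨hxi ▸ hq, ?_⟩
  intro p hp
  rw [hxi, hq2]
  exact Finset.min'_le _ _ (Finset.mem_image_of_mem _ hp)

lemma Bset_zero : Bset n M 0 = placesA n \ M := rfl

lemma Bset_succ (j : ℕ) : Bset n M (j + 1) =
    Bset n M j \
      insert (xiOf n (Bset n M j)) (minusSet n (Bset n M j) ∪ plusSet n (Bset n M j)) := rfl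

lemma Bset_subset_placesA : ∀ j, Bset n M j ⊆ placesA n
  | 0 => Finset.sdiff_subset
  | (j + 1) => Finset.sdiff_subset.trans (Bset_subset_placesA j)

lemma Bset_succ_subset (j : ℕ) : Bset n M (j + 1) ⊆ Bset n M j := Finset.sdiff_subset

lemma Bset_subset_of_le {j j' : ℕ} (h : j ≤ j') : Bset n M j' ⊆ Bset n M j := by
  induction h with
  | refl => exact subset_rfl
  | step h ih => exact (Bset_succ_subset _).trans ih

lemma mem_Bset_succ {p : ℕ × ℕ} {j : ℕ} :
    p ∈ Bset n M (j + 1) ↔ p ∈ Bset n M j ∧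
      ¬(p = xiOf n (Bset n M j) ∨ p ∈ minusSet n (Bset n M j) ∨ p ∈ plusSet n (Bset n M j)) := by
  rw [Bset_succ, Finset.mem_sdiff, Finset.mem_insert, Finset.mem_union]

lemma mem_minusSet {B : Finset (ℕ × ℕ)} {p q : ℕ} :
    (p, q) ∈ minusSet n B ↔
      (p, q) ∈ B ∧ p = (xiOf n B).1 ∧ (xiOf n B).2 < q ∧ q < (xiOf n B).1 ∧
        (q, (xiOf n B).2) ∈ B := by
  unfold minusSet
  rw [Finset.mem_filter]

lemma mem_plusSet {B : Finset (ℕ × ℕ)} {p q : ℕ} :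
    (p, q) ∈ plusSet n B ↔
      (p, q) ∈ B ∧ q = (xiOf n B).2 ∧ (xiOf n B).2 < p ∧ p < (xiOf n B).1 ∧
        ((xiOf n B).1, p) ∈ B := by
  unfold plusSet
  rw [Finset.mem_filter]

lemma exists_filled_step {p : ℕ × ℕ} :
    ∀ {j : ℕ}, p ∈ Bset n M 0 → p ∉ Bset n M j →
      ∃ u, u < j ∧ p ∈ Bset n M u ∧ p ∉ Bset n M (u + 1) := by
  intro j
  induction j with
  | zero => intro h0 h; exact absurd h0 h
  | succ j ih =>
      intro h0 h
      by_cases hj : p ∈ Bset n M j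
      · exact ⟨j, Nat.lt_succ_self _, hj, h⟩
      · obtain ⟨u, hu, h1, h2⟩ := ih h0 hj
        exact ⟨u, hu.trans (Nat.lt_succ_self _), h1, h2⟩

lemma ideal_rect (hM : IsIdealSet n M) {x z k t : ℕ} (hxz : (x, z) ∈ M)
    (hxk : x ≤ k) (hk : k ≤ n) (ht : 1 ≤ t) (htz : t ≤ z) : (k, t) ∈ M := by
  have h1 : (k, z) ∈ M := by
    rcases eq_or_lt_of_le hxk with rfl | h
    · exact hxz
    · exact hM.2.2 (x, z) hxz k h hk
  rcases eq_or_lt_of_le htz with rfl | h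
  · exact h1
  · exact hM.2.1 (k, z) h1 t ht h

/-- The mutual invariant: a transitivity property and a row property of
each state `B_j` of the diagram process, relative to the `≻`-greatest
element of `B_j`. -/
theorem good (hM : IsIdealSet n M) : ∀ j : ℕ,
    (∀ x y z : ℕ, (x, y) ∈ Bset n M j → (y, z) ∈ Bset n M j →
      x < (xiOf n (Bset n M j)).1 → (x, z) ∈ Bset n M j) ∧
    (∀ b c : ℕ, ((xiOf n (Bset n M j)).1, b) ∈ Bset n M j → (b, c) ∈ Bset n M j →
      (xiOf n (Bset n M j)).2 < c → ((xiOf n (Bset n M j)).1, c) ∈ Bset n M j) := by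
  intro j
  induction j using Nat.strong_induction_on with
  | _ j IH => ?_
  have hBA : Bset n M j ⊆ placesA n := Bset_subset_placesA j
  constructor
  · -- transitivity part
    intro x y z hxy hyz hxk
    by_contra hc
    have hxyA := mem_placesA.1 (hBA hxy)
    have hyzA := mem_placesA.1 (hBA hyz)
    have hne : (Bset n M j).Nonempty := ⟨_, hxy⟩
    obtain ⟨hξB, hξmin⟩ := xiOf_spec hne hBA
    have hξA := mem_placesA.1 (hBA hξB)
    -- z is at least the column of ξ
    have htz : (xiOf n (Bset n M j)).2 ≤ z := by
      by_contra h
      have h1 := ordA_lt_of_snd_lt (n := n) (p := xiOf n (Bset n M j)) (q := (y, z))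
        (show (y, z).2 < _ by omega)
      have h2 := hξmin _ hyz
      omega
    have hxzA : (x, z) ∈ placesA n := mem_placesA.2 ⟨by omega, by omega, by omega⟩
    by_cases hMem : (x, z) ∈ M
    · have h2 : ((xiOf n (Bset n M j)).1, (xiOf n (Bset n M j)).2) ∈ M :=
        ideal_rect hM hMem (le_of_lt hxk) hξA.1 hξA.2.1 htz
      have h3 : xiOf n (Bset n M j) ∈ Bset n M 0 := Bset_subset_of_le (Nat.zero_le j) hξB
      rw [Bset_zero, Finset.mem_sdiff] at h3
      exact h3.2 (by rwa [Prod.mk.eta] at h2)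
    · have h0 : (x, z) ∈ Bset n M 0 := by
        rw [Bset_zero, Finset.mem_sdiff]; exact ⟨hxzA, hMem⟩
      obtain ⟨u, huj, hu1, hu2⟩ := exists_filled_step h0 hc
      have hsub : Bset n M j ⊆ Bset n M (u + 1) := Bset_subset_of_le (by omega)
      have hsubu : Bset n M j ⊆ Bset n M u := Bset_subset_of_le (by omega)
      have hneu : (Bset n M u).Nonempty := ⟨_, hu1⟩
      obtain ⟨hξ'B, hξ'min⟩ := xiOf_spec hneu (Bset_subset_placesA u)
      have hcases : (x, z) = xiOf n (Bset n M u) ∨ (x, z) ∈ minusSet n (Bset n M u) ∨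
          (x, z) ∈ plusSet n (Bset n M u) := by
        by_contra h
        exact hu2 (mem_Bset_succ.2 ⟨hu1, h⟩)
      have hxyU : (x, y) ∈ Bset n M (u + 1) := hsub hxy
      have hyzU : (y, z) ∈ Bset n M (u + 1) := hsub hyz
      rcases hcases with hEq | hMin | hPlus
      · -- ⊗ was put at (x,z); then (x,y) would have received −
        have h1 : (xiOf n (Bset n M u)).1 = x := by rw [← hEq]
        have h2 : (xiOf n (Bset n M u)).2 = z := by rw [← hEq]
        have : (x, y) ∈ minusSet n (Bset n M u) := by
          rw [mem_minusSet]
          exact ⟨hsubu hxy, h1.symm, by omega, by omega, by rw [h2]; exact hsubu hyz⟩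
        exact (mem_Bset_succ.1 hxyU).2 (Or.inr (Or.inl this))
      · rw [mem_minusSet] at hMin
        obtain ⟨-, h1, h2, h3, h4⟩ := hMin
        have hyτ : (y, (xiOf n (Bset n M u)).2) ∉ Bset n M u := by
          intro hmem
          have : (x, y) ∈ minusSet n (Bset n M u) := by
            rw [mem_minusSet]
            exact ⟨hsubu hxy, h1, by omega, by omega, hmem⟩
          exact (mem_Bset_succ.1 hxyU).2 (Or.inr (Or.inl this))
        exact hyτ ((IH u huj).1 y z _ (hsubu hyz) h4 (by omega))
      · rw [mem_plusSet] at hPlus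
        obtain ⟨-, h1, h2, h3, h4⟩ := hPlus
        have hκy : ((xiOf n (Bset n M u)).1, y) ∉ Bset n M u := by
          intro hmem
          have : (y, z) ∈ plusSet n (Bset n M u) := by
            rw [mem_plusSet]
            exact ⟨hsubu hyz, h1, by omega, by omega, hmem⟩
          exact (mem_Bset_succ.1 hyzU).2 (Or.inr (Or.inr this))
        exact hκy ((IH u huj).2 x y h4 (hsubu hxy) (by omega))
  · -- row part
    intro b c hkb hbc htc
    by_contra hc
    have hkbA := mem_placesA.1 (hBA hkb)
    have hbcA := mem_placesA.1 (hBA hbc)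
    have hne : (Bset n M j).Nonempty := ⟨_, hkb⟩
    obtain ⟨hξB, hξmin⟩ := xiOf_spec hne hBA
    have hξA := mem_placesA.1 (hBA hξB)
    have hkcA : ((xiOf n (Bset n M j)).1, c) ∈ placesA n :=
      mem_placesA.2 ⟨hξA.1, by omega, by omega⟩
    by_cases hMem : ((xiOf n (Bset n M j)).1, c) ∈ M
    · have h2 : ((xiOf n (Bset n M j)).1, (xiOf n (Bset n M j)).2) ∈ M :=
        hM.2.1 _ hMem _ hξA.2.1 htc
      have h3 : xiOf n (Bset n M j) ∈ Bset n M 0 := Bset_subset_of_le (Nat.zero_le j) hξB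
      rw [Bset_zero, Finset.mem_sdiff] at h3
      exact h3.2 (by rwa [Prod.mk.eta] at h2)
    · have h0 : ((xiOf n (Bset n M j)).1, c) ∈ Bset n M 0 := by
        rw [Bset_zero, Finset.mem_sdiff]; exact ⟨hkcA, hMem⟩
      obtain ⟨u, huj, hu1, hu2⟩ := exists_filled_step h0 hc
      have hsub : Bset n M j ⊆ Bset n M (u + 1) := Bset_subset_of_le (by omega)
      have hsubu : Bset n M j ⊆ Bset n M u := Bset_subset_of_le (by omega)
      have hneu : (Bset n M u).Nonempty := ⟨_, hu1⟩
      obtain ⟨hξ'B, hξ'min⟩ := xiOf_spec hneu (Bset_subset_placesA u)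
      have hcases : ((xiOf n (Bset n M j)).1, c) = xiOf n (Bset n M u) ∨
          ((xiOf n (Bset n M j)).1, c) ∈ minusSet n (Bset n M u) ∨
          ((xiOf n (Bset n M j)).1, c) ∈ plusSet n (Bset n M u) := by
        by_contra h
        exact hu2 (mem_Bset_succ.2 ⟨hu1, h⟩)
      have hkbU : ((xiOf n (Bset n M j)).1, b) ∈ Bset n M (u + 1) := hsub hkb
      rcases hcases with hEq | hMin | hPlus
      · have h1 : (xiOf n (Bset n M u)).1 = (xiOf n (Bset n M j)).1 := by rw [← hEq]
        have h2 : (xiOf n (Bset n M u)).2 = c := by rw [← hEq]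
        have : ((xiOf n (Bset n M j)).1, b) ∈ minusSet n (Bset n M u) := by
          rw [mem_minusSet]
          exact ⟨hsubu hkb, h1.symm, by omega, by omega, by rw [h2]; exact hsubu hbc⟩
        exact (mem_Bset_succ.1 hkbU).2 (Or.inr (Or.inl this))
      · rw [mem_minusSet] at hMin
        obtain ⟨-, h1, h2, h3, h4⟩ := hMin
        have hbτ : (b, (xiOf n (Bset n M u)).2) ∉ Bset n M u := by
          intro hmem
          have : ((xiOf n (Bset n M j)).1, b) ∈ minusSet n (Bset n M u) := by
            rw [mem_minusSet]
            exact ⟨hsubu hkb, h1, by omega, by omega, hmem⟩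
          exact (mem_Bset_succ.1 hkbU).2 (Or.inr (Or.inl this))
        exact hbτ ((IH u huj).1 b c _ (hsubu hbc) h4 (by omega))
      · rw [mem_plusSet] at hPlus
        obtain ⟨-, h1, h2, h3, h4⟩ := hPlus
        have hmm : xiOf n (Bset n M j) ∈ Bset n M u := hsubu hξB
        have h5 := hξ'min _ hmm
        have h6 := ordA_lt_of_snd_lt (n := n) (p := xiOf n (Bset n M u))
          (q := xiOf n (Bset n M j)) (by omega)
        omega

end Aux

/-- **Case 6(i).**  Writing `ξ_i = (k,t)`: if `(a,b) ∈ B_i^{(1.1)}` and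
`(b,c) ∈ B_i^{(1.2)}` of type (c), then `(a,c) ∈ B_i^{(1.1)}`. -/
theorem case6i (K : Type*) [Field K] [CharZero K]
    (n s : ℕ) (hn : 2 ≤ n) (M : Finset (ℕ × ℕ))
    (hM : IsIdealSet n M) (hs : IsNumSteps n M s)
    (i k t : ℕ) (hi1 : 1 ≤ i) (his : i ≤ s)
    (hkt : xiStep n M i = (k, t))
    (a b c : ℕ)
    (h1 : memB11 n M i k t (a, b))
    (h2 : memB12c n M i k t (b, c)) :
    memB11 n M i k t (a, c) := by
  obtain ⟨hab, ha1, hak, htb, hbk, hat, hkb⟩ := h1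
  obtain ⟨hbc, hb1, hbk', htc, hck, -⟩ := h2
  have hxi : xiOf n (Bset n M (i - 1)) = (k, t) := hkt
  have hii : i - 1 + 1 = i := by omega
  have hsub : Bset n M i ⊆ Bset n M (i - 1) := by
    rw [← hii]; exact Bset_succ_subset _
  have hab' : (a, b) ∈ Bset n M (i - 1) := hsub hab
  have hbc' : (b, c) ∈ Bset n M (i - 1) := hsub hbc
  have hak' : a < k := hak
  have htc' : t < c := htc
  -- (a, c) ∈ B_{i-1} by the transitivity invariant
  have hac' : (a, c) ∈ Bset n M (i - 1) :=
    (good hM (i - 1)).1 a b c hab' hbc' (by rw [hxi]; exact hak')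
  -- (k, c) ∈ B_{i-1} by the row invariant
  have hkb' : ((xiOf n (Bset n M (i - 1))).1, b) ∈ Bset n M (i - 1) := by
    rw [hxi]; exact hkb
  have hkc : (k, c) ∈ Bset n M (i - 1) := by
    have := (good hM (i - 1)).2 b c hkb' hbc' (by rw [hxi]; exact htc')
    rwa [hxi] at this
  -- (a, c) survives step i
  have hac : (a, c) ∈ Bset n M i := by
    rw [← hii]
    refine mem_Bset_succ.2 ⟨hac', ?_⟩
    rintro (hEq | hMin | hPlus)
    · have : a = k := by
        have := congrArg Prod.fst hEq
        rw [hxi] at this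
        exact this
      omega
    · rw [mem_minusSet] at hMin
      have : a = k := by rw [hxi] at hMin; exact hMin.2.1
      omega
    · rw [mem_plusSet] at hPlus
      have : c = t := by rw [hxi] at hPlus; exact hPlus.2.1
      omega
  exact ⟨hac, ha1, hak, htc, hck, hat, hkc⟩
end Panov
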